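/- Let $V \in \mathbb{R}^{l\times n}$ and $g \in O_l(\mathbb{C})$ be such that $gV$ is a real matrix. Then there exists $g_1 \in O_l(\mathbb{R})$ such that $g_1 g V = V$; in particular $g \in O_l(\mathbb{R}) \cdot \mathrm{Stab}(V)$ where $\mathrm{Stab}(V) = \{s \in O_l(\mathbb{C}) \mid sV = V\}$. -/

import Mathlib

open Matrix

set_option maxHeartbeats 1000000

-- auxiliary: equal Gram matrices implies related by orthogonal matrix
theorem gram_eq_exists_orth {l n : ℕ} (W V : Matrix (Fin l) (Fin n) ℝ)
    (h : Wᵀ * W = Vᵀ * V) :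
    ∃ G : Matrix (Fin l) (Fin l) ℝ, Gᵀ * G = 1 ∧ G * W = V := by
  classical
  let E := EuclideanSpace ℝ (Fin l)
  let F := EuclideanSpace ℝ (Fin n)
  let SW : F →ₗ[ℝ] E :=
    { toFun := fun x => WithLp.toLp 2 (W.mulVec x)
      map_add' := fun x y => congrArg (WithLp.toLp 2) (Matrix.mulVec_add W x y)
      map_smul' := fun c x => congrArg (WithLp.toLp 2) (Matrix.mulVec_smul W c x) }
  let TV : F →ₗ[ℝ] E :=
    { toFun := fun x => WithLp.toLp 2 (V.mulVec x)
      map_add' := fun x y => congrArg (WithLp.toLp 2) (Matrix.mulVec_add V x y)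
      map_smul' := fun c x => congrArg (WithLp.toLp 2) (Matrix.mulVec_smul V c x) }
  have inner_eq : ∀ x y : F, (inner ℝ (SW x) (SW y) : ℝ) = (inner ℝ (TV x) (TV y) : ℝ) := by
    intro x y
    have key : ∀ (A : Matrix (Fin l) (Fin n) ℝ) (x y : F),
        (inner ℝ (show E from WithLp.toLp 2 (A.mulVec x)) (show E from WithLp.toLp 2 (A.mulVec y)) : ℝ)
          = x ⬝ᵥ (Aᵀ * A).mulVec y := by
      intro A x y
      have hd : (inner ℝ (show E from WithLp.toLp 2 (A.mulVec x)) (show E from WithLp.toLp 2 (A.mulVec y)) : ℝ)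
          = (A.mulVec x) ⬝ᵥ (A.mulVec y) := by
        simp [inner, dotProduct, mul_comm]
      rw [hd, ← Matrix.mulVec_mulVec, Matrix.dotProduct_mulVec x, Matrix.vecMul_transpose]
    show (inner ℝ (show E from WithLp.toLp 2 (W.mulVec x)) (show E from WithLp.toLp 2 (W.mulVec y)) : ℝ)
        = inner ℝ (show E from WithLp.toLp 2 (V.mulVec x)) (show E from WithLp.toLp 2 (V.mulVec y))
    rw [key, key, h]
  have norm_eq : ∀ x : F, ‖SW x‖ = ‖TV x‖ := by
    intro x
    rw [← sq_eq_sq₀ (norm_nonneg _) (norm_nonneg _), ← real_inner_self_eq_norm_sq,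
      ← real_inner_self_eq_norm_sq, inner_eq]
  have hker : LinearMap.ker SW ≤ LinearMap.ker TV := by
    intro x hx
    rw [LinearMap.mem_ker] at hx ⊢
    have h0 : ‖TV x‖ = 0 := by rw [← norm_eq, hx, norm_zero]
    exact norm_eq_zero.mp h0
  let q : (F ⧸ LinearMap.ker SW) →ₗ[ℝ] E := (LinearMap.ker SW).liftQ TV hker
  let e := SW.quotKerEquivRange
  let f : LinearMap.range SW →ₗ[ℝ] E := q ∘ₗ (e.symm : LinearMap.range SW →ₗ[ℝ] _)
  have hf : ∀ x : F, f ⟨SW x, LinearMap.mem_range_self _ x⟩ = TV x := by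
    intro x
    have he : e (Submodule.Quotient.mk x) = ⟨SW x, LinearMap.mem_range_self _ x⟩ :=
      Subtype.ext (SW.quotKerEquivRange_apply_mk x)
    have hs : e.symm ⟨SW x, LinearMap.mem_range_self _ x⟩ = Submodule.Quotient.mk x := by
      rw [LinearEquiv.symm_apply_eq, he]
    show q (e.symm ⟨SW x, LinearMap.mem_range_self _ x⟩) = TV x
    rw [hs]
    rfl
  have hfn : ∀ v : LinearMap.range SW, ‖f v‖ = ‖v‖ := by
    rintro ⟨v, hv⟩
    obtain ⟨x, rfl⟩ := hv
    rw [hf x]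
    show ‖TV x‖ = ‖SW x‖
    exact (norm_eq x).symm
  let L : LinearMap.range SW →ₗᵢ[ℝ] E := ⟨f, hfn⟩
  let G := L.extend
  have hG : ∀ x : F, G (SW x) = TV x := by
    intro x
    have h1 : G ((⟨SW x, LinearMap.mem_range_self _ x⟩ : LinearMap.range SW) : E)
        = L ⟨SW x, LinearMap.mem_range_self _ x⟩ :=
      L.extend_apply ⟨SW x, LinearMap.mem_range_self _ x⟩
    rw [show ((⟨SW x, LinearMap.mem_range_self _ x⟩ : LinearMap.range SW) : E) = SW x from rfl]
      at h1
    rw [h1]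
    exact hf x
  let G₁ : Matrix (Fin l) (Fin l) ℝ := fun i j => G (EuclideanSpace.single j 1) i
  have hGx : ∀ (x : E) (i : Fin l), G x i = ∑ k, G₁ i k * x k := by
    intro x i
    have hx : x = ∑ k, x k • EuclideanSpace.single k (1 : ℝ) := by
      ext j
      rw [WithLp.ofLp_sum, Finset.sum_apply]
      simp [PiLp.smul_apply, EuclideanSpace.single_apply, Finset.sum_ite_eq]
    conv_lhs => rw [hx]
    rw [map_sum, WithLp.ofLp_sum, Finset.sum_apply]
    refine Finset.sum_congr rfl fun k _ => ?_
    rw [_root_.map_smul]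
    show x k * G (EuclideanSpace.single k 1) i = _
    rw [mul_comm]
  refine ⟨G₁, ?_, ?_⟩
  · ext i j
    have : (G₁ᵀ * G₁) i j
        = (inner ℝ (G (EuclideanSpace.single i 1)) (G (EuclideanSpace.single j 1)) : ℝ) := by
      rw [Matrix.mul_apply]
      simp [Matrix.mul_apply, inner, G₁, Matrix.transpose_apply]
      exact Finset.sum_congr rfl fun _ _ => mul_comm _ _
    rw [this, G.inner_map_map, EuclideanSpace.inner_single_left]
    simp [EuclideanSpace.single_apply, Matrix.one_apply, eq_comm]
  · ext i j
    have hcol : (fun k => W k j) = SW (EuclideanSpace.single j (1 : ℝ)) := by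
      show _ = W.mulVec (Pi.single j 1)
      rw [Matrix.mulVec_single]
      ext k
      simp
    have : (G₁ * W) i j = G (SW (EuclideanSpace.single j (1 : ℝ))) i := by
      rw [hGx, ← hcol]
      simp [Matrix.mul_apply]
    rw [this, hG]
    show (V.mulVec (Pi.single j 1)) i = V i j
    rw [Matrix.mulVec_single]
    simp


/-- If `V` is real and `g ∈ O_l(ℂ)` is such that `gV` is real, then there is a real
orthogonal `g₁` with `g₁ g V = V`; in particular `g ∈ O_l(ℝ) · Stab(V)`. -/
theorem real_image_implies_real_orthogonal {l n : ℕ} (V : Matrix (Fin l) (Fin n) ℝ)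
    (g : Matrix (Fin l) (Fin l) ℂ) (hg : gᵀ * g = 1)
    (hreal : ∀ i j, ((g * V.map (Complex.ofReal)) i j).im = 0) :
    (∃ g₁ : Matrix (Fin l) (Fin l) ℝ, g₁ᵀ * g₁ = 1 ∧
        g₁.map (Complex.ofReal) * g * V.map (Complex.ofReal) = V.map (Complex.ofReal)) ∧
    ∃ g₂ s : Matrix (Fin l) (Fin l) ℂ,
      (∀ i j, (g₂ i j).im = 0) ∧ g₂ᵀ * g₂ = 1 ∧
      sᵀ * s = 1 ∧ s * V.map (Complex.ofReal) = V.map (Complex.ofReal) ∧ g = g₂ * s := by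
  have mapmul : ∀ {a b c : ℕ} (A : Matrix (Fin a) (Fin b) ℝ) (B : Matrix (Fin b) (Fin c) ℝ),
      (A * B).map Complex.ofReal = A.map Complex.ofReal * B.map Complex.ofReal := by
    intro a b c A B
    exact Matrix.map_mul (f := Complex.ofRealHom)
  have mapone : ∀ {a : ℕ}, (1 : Matrix (Fin a) (Fin a) ℝ).map Complex.ofReal = 1 := by
    intro a
    exact Matrix.map_one _ Complex.ofReal_zero Complex.ofReal_one
  have maptr : ∀ {a b : ℕ} (A : Matrix (Fin a) (Fin b) ℝ),
      Aᵀ.map Complex.ofReal = (A.map Complex.ofReal)ᵀ := fun A => rfl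
  set Vc := V.map Complex.ofReal with hVc
  let Wr : Matrix (Fin l) (Fin n) ℝ := fun i j => ((g * Vc) i j).re
  have hW : Wr.map Complex.ofReal = g * Vc := by
    ext i j
    apply Complex.ext
    · rw [Matrix.map_apply]; simp [Wr, Matrix.map_apply]
    · rw [Matrix.map_apply]; simp [Wr, Matrix.map_apply, hreal i j]
  have hgram : Wrᵀ * Wr = Vᵀ * V := by
    have hmap : (Wrᵀ * Wr).map Complex.ofReal = (Vᵀ * V).map Complex.ofReal := by
      rw [mapmul, mapmul, maptr, maptr, hW]
      calc (g * Vc)ᵀ * (g * Vc) = Vcᵀ * (gᵀ * g) * Vc := by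
            rw [Matrix.transpose_mul]
            simp only [Matrix.mul_assoc]
        _ = Vcᵀ * Vc := by rw [hg, Matrix.mul_one]
    ext i j
    exact Complex.ofReal_injective (congrFun (congrFun hmap i) j)
  obtain ⟨G, hGo, hGW⟩ := gram_eq_exists_orth Wr V hgram
  have hkey : G.map Complex.ofReal * (g * Vc) = Vc := by
    rw [← hW, ← mapmul, hGW]
  constructor
  · exact ⟨G, hGo, by rw [Matrix.mul_assoc]; exact hkey⟩
  · refine ⟨Gᵀ.map Complex.ofReal, G.map Complex.ofReal * g, ?_, ?_, ?_, ?_, ?_⟩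
    · intro i j; simp [Matrix.map_apply]
    · rw [← maptr, ← mapmul, Matrix.transpose_transpose, mul_eq_one_comm.mp hGo, mapone]
    · calc (G.map Complex.ofReal * g)ᵀ * (G.map Complex.ofReal * g)
          = gᵀ * ((G.map Complex.ofReal)ᵀ * G.map Complex.ofReal) * g := by
            rw [Matrix.transpose_mul]
            simp only [Matrix.mul_assoc]
        _ = 1 := by rw [← maptr, ← mapmul, hGo, mapone, Matrix.mul_one, hg]
    · rw [Matrix.mul_assoc]; exact hkey
    · rw [← Matrix.mul_assoc, ← mapmul, hGo, mapone, Matrix.one_mul]
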